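/- arXiv:1605.02478 — 2 statements merged into one kernel-verified Lean document; each statement's English description precedes it below -/
import Mathlib

section
/- For a finite field F_q, the generating function of the number of monic square-full polynomials satisfies: the sum over n ≥ 0 of (number of monic square-full polynomials of degree n in F_q[T]) times u^n equals Z(u^2)Z(u^3)/Z(u^6), where Z(u) = 1/(1-qu) is the zeta function of F_q[T]. -/
/-- A monic polynomial is square-full if every irreducible polynomial dividing it
divides it at least twice. -/
def IsSquareFullPoly {F : Type*} [Field F] (f : Polynomial F) : Prop :=
  ∀ P : Polynomial F, Irreducible P → P ∣ f → P ^ 2 ∣ f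

open Polynomial UniqueFactorizationMonoid

open Polynomial

variable {F : Type} [Field F]


variable [DecidableEq F]

variable {F : Type} [Field F] [DecidableEq F]

lemma exists_monic_irred_factor (f : F[X]) (hu : ¬IsUnit f) (h0 : f ≠ 0) :
    ∃ P : F[X], P.Monic ∧ Irreducible P ∧ P ∣ f := by
  classical
  obtain ⟨i, hi, hif⟩ := WfDvdMonoid.exists_irreducible_factor hu h0
  exact ⟨normalize i, Polynomial.monic_normalize hi.ne_zero,
    (normalize_associated i).symm.irreducible hi,
    (normalize_associated i).dvd.trans hif⟩

lemma monic_eq_of_nf_eq {p q : F[X]} (hp : p.Monic) (hq : q.Monic)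
    (h : normalizedFactors p = normalizedFactors q) : p = q := by
  have h1 := prod_normalizedFactors hp.ne_zero
  have h2 := prod_normalizedFactors hq.ne_zero
  exact Polynomial.eq_of_monic_of_associated hp hq (h1.symm.trans (h ▸ h2))

/-- Existence of the squarefree decomposition `f = s * g ^ 2`. -/
lemma exists_sqfree_decomp : ∀ n (f : F[X]), f.Monic → f.natDegree = n →
    ∃ s g : F[X], s.Monic ∧ Squarefree s ∧ g.Monic ∧ f = s * g ^ 2 := by
  intro n
  induction n using Nat.strong_induction_on with
  | _ n ih =>
  intro f hf hd
  by_cases hsq : Squarefree f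
  · exact ⟨f, 1, hf, hsq, monic_one, by ring⟩
  · simp only [Squarefree] at hsq; push_neg at hsq
    obtain ⟨x, hxx, hxu⟩ := hsq
    have hx0 : x ≠ 0 := by
      rintro rfl
      exact hf.ne_zero (zero_dvd_iff.mp (by simpa using hxx))
    obtain ⟨P, hPm, hPi, hPx⟩ := exists_monic_irred_factor x hxu hx0
    have hP2 : P ^ 2 ∣ f := by
      rw [sq]; exact (mul_dvd_mul hPx hPx).trans hxx
    obtain ⟨f₁, hf₁⟩ := hP2
    have hf₁m : f₁.Monic := (hPm.pow 2).of_mul_monic_left (hf₁ ▸ hf)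
    have hdeg : f₁.natDegree < n := by
      have h1 : f.natDegree = (P ^ 2).natDegree + f₁.natDegree := by
        rw [hf₁, (hPm.pow 2).natDegree_mul hf₁m]
      have h2 : 0 < (P ^ 2).natDegree := by
        rw [natDegree_pow]
        have := hPi.natDegree_pos
        omega
      omega
    obtain ⟨s, g, hsm, hssq, hgm, hrec⟩ := ih f₁.natDegree hdeg f₁ hf₁m rfl
    exact ⟨s, P * g, hsm, hssq, hPm.mul hgm, by rw [hf₁, hrec]; ring⟩

/-- Uniqueness of the squarefree decomposition. -/
lemma sqfree_decomp_unique {s g s' g' : F[X]} (hs : s.Monic) (hsq : Squarefree s) (hg : g.Monic)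
    (hs' : s'.Monic) (hsq' : Squarefree s') (hg' : g'.Monic) (h : s * g ^ 2 = s' * g' ^ 2) :
    s = s' ∧ g = g' := by
  classical
  have hnf : normalizedFactors s + 2 • normalizedFactors g
      = normalizedFactors s' + 2 • normalizedFactors g' := by
    have e1 := normalizedFactors_mul hs.ne_zero (pow_ne_zero 2 hg.ne_zero)
    have e2 := normalizedFactors_mul hs'.ne_zero (pow_ne_zero 2 hg'.ne_zero)
    rw [normalizedFactors_pow] at e1 e2
    rw [← e1, ← e2, h]
  have hcs := Multiset.nodup_iff_count_le_one.mp
    ((squarefree_iff_nodup_normalizedFactors hs.ne_zero).mp hsq)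
  have hcs' := Multiset.nodup_iff_count_le_one.mp
    ((squarefree_iff_nodup_normalizedFactors hs'.ne_zero).mp hsq')
  have key : ∀ a : F[X], Multiset.count a (normalizedFactors s)
      = Multiset.count a (normalizedFactors s')
      ∧ Multiset.count a (normalizedFactors g) = Multiset.count a (normalizedFactors g') := by
    intro a
    have := congrArg (Multiset.count a) hnf
    simp only [Multiset.count_add, Multiset.count_nsmul] at this
    have h1 := hcs a
    have h2 := hcs' a
    omega
  constructor
  · exact monic_eq_of_nf_eq hs hs' (Multiset.ext.mpr fun a => (key a).1)
  · exact monic_eq_of_nf_eq hg hg' (Multiset.ext.mpr fun a => (key a).2)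

/-- `a^2 * b^3` is squarefull. -/
lemma isSquareFullPoly_sq_mul_cube (a b : F[X]) (h0 : a ≠ 0) (h0' : b ≠ 0) :
    ∀ P : F[X], Irreducible P → P ∣ a ^ 2 * b ^ 3 → P ^ 2 ∣ a ^ 2 * b ^ 3 := by
  intro P hP hdvd
  rcases hP.prime.dvd_mul.mp hdvd with h | h
  · exact dvd_mul_of_dvd_left (pow_dvd_pow_of_dvd (hP.prime.dvd_of_dvd_pow h) 2) _
  · exact dvd_mul_of_dvd_right
      ((pow_dvd_pow_of_dvd (hP.prime.dvd_of_dvd_pow h) 2).trans (pow_dvd_pow b (by norm_num))) _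

/-- Existence of the squarefull decomposition `f = a ^ 2 * b ^ 3` with `b` squarefree. -/
lemma exists_sqfull_decomp : ∀ n (f : F[X]), f.Monic →
    (∀ P : F[X], Irreducible P → P ∣ f → P ^ 2 ∣ f) → f.natDegree = n →
    ∃ a b : F[X], a.Monic ∧ b.Monic ∧ Squarefree b ∧ f = a ^ 2 * b ^ 3 := by
  intro n
  induction n using Nat.strong_induction_on with
  | _ n ih =>
  intro f hf hsf hd
  rcases Nat.eq_zero_or_pos n with rfl | hn
  · refine ⟨1, 1, monic_one, monic_one, squarefree_one, ?_⟩
    have : f = 1 := hf.natDegree_eq_zero.mp hd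
    rw [this]; ring
  · have hfu : ¬IsUnit f := by
      intro h
      rw [Polynomial.natDegree_eq_zero_of_isUnit h] at hd; omega
    obtain ⟨P, hPm, hPi, hPf⟩ := exists_monic_irred_factor f hfu hf.ne_zero
    have hfin : FiniteMultiplicity P f :=
      FiniteMultiplicity.of_not_isUnit hPi.not_isUnit hf.ne_zero
    set e := multiplicity P f with he
    obtain ⟨f₁, hf₁, hnd⟩ := hfin.exists_eq_pow_mul_and_not_dvd
    have hPp := hPi.prime
    have he2 : 2 ≤ e := by
      have h2 : P ^ 2 ∣ f := hsf P hPi hPf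
      rw [hf₁] at h2
      exact (pow_dvd_pow_iff hPp.ne_zero hPi.not_isUnit).mp
        (hPp.pow_dvd_of_dvd_mul_right 2 hnd h2)
    have hf₁m : f₁.Monic := (hPm.pow e).of_mul_monic_left (hf₁ ▸ hf)
    have hf₁sf : ∀ Q : F[X], Irreducible Q → Q ∣ f₁ → Q ^ 2 ∣ f₁ := by
      intro Q hQ hQf₁
      have hQnP : ¬Q ∣ P ^ e := by
        intro hQP
        have : Associated Q P := hQ.associated_of_dvd hPi (hQ.prime.dvd_of_dvd_pow hQP)
        exact hnd (this.symm.dvd.trans hQf₁)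
      have hQf : Q ∣ f := hQf₁.trans ⟨P ^ e, by rw [hf₁]; ring⟩
      have := hsf Q hQ hQf
      rw [hf₁] at this
      exact hQ.prime.pow_dvd_of_dvd_mul_left 2 hQnP this
    have hdeg : f₁.natDegree < n := by
      have h1 : f.natDegree = (P ^ e).natDegree + f₁.natDegree := by
        rw [hf₁, (hPm.pow e).natDegree_mul hf₁m]
      have h2 : 0 < P.natDegree := hPi.natDegree_pos
      rw [natDegree_pow] at h1
      nlinarith
    obtain ⟨a₁, b₁, ha₁, hb₁, hb₁sq, hrec⟩ := ih f₁.natDegree hdeg f₁ hf₁m hf₁sf rfl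
    have hPb₁ : ¬P ∣ b₁ := by
      intro h
      exact hnd (h.trans ⟨a₁ ^ 2 * b₁ ^ 2, by rw [hrec]; ring⟩)
    rcases Nat.even_or_odd e with ⟨k, hk⟩ | ⟨k, hk⟩
    · refine ⟨P ^ k * a₁, b₁, (hPm.pow k).mul ha₁, hb₁, hb₁sq, ?_⟩
      rw [hf₁, hrec, ← he, hk]; ring
    · have hk1 : 1 ≤ k := by omega
      refine ⟨P ^ (k - 1) * a₁, P * b₁, (hPm.pow _).mul ha₁, hPm.mul hb₁, ?_, ?_⟩
      · exact squarefree_mul_iff.mpr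
          ⟨((hPi.coprime_iff_not_dvd).mpr hPb₁).isRelPrime, hPi.squarefree, hb₁sq⟩
      · have : e = 2 * (k - 1) + 3 := by omega
        rw [hf₁, hrec, ← he, this]; ring

/-- Uniqueness of the squarefull decomposition. -/
lemma sqfull_decomp_unique {a b a' b' : F[X]} (ha : a.Monic) (hb : b.Monic) (hbsq : Squarefree b)
    (ha' : a'.Monic) (hb' : b'.Monic) (hbsq' : Squarefree b')
    (h : a ^ 2 * b ^ 3 = a' ^ 2 * b' ^ 3) : a = a' ∧ b = b' := by
  classical
  have hnf : 2 • normalizedFactors a + 3 • normalizedFactors b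
      = 2 • normalizedFactors a' + 3 • normalizedFactors b' := by
    have e1 := normalizedFactors_mul (pow_ne_zero 2 ha.ne_zero) (pow_ne_zero 3 hb.ne_zero)
    have e2 := normalizedFactors_mul (pow_ne_zero 2 ha'.ne_zero) (pow_ne_zero 3 hb'.ne_zero)
    rw [normalizedFactors_pow, normalizedFactors_pow] at e1 e2
    rw [← e1, ← e2, h]
  have hcb := Multiset.nodup_iff_count_le_one.mp
    ((squarefree_iff_nodup_normalizedFactors hb.ne_zero).mp hbsq)
  have hcb' := Multiset.nodup_iff_count_le_one.mp
    ((squarefree_iff_nodup_normalizedFactors hb'.ne_zero).mp hbsq')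
  have key : ∀ x : F[X], Multiset.count x (normalizedFactors a)
      = Multiset.count x (normalizedFactors a')
      ∧ Multiset.count x (normalizedFactors b) = Multiset.count x (normalizedFactors b') := by
    intro x
    have := congrArg (Multiset.count x) hnf
    simp only [Multiset.count_add, Multiset.count_nsmul] at this
    have h1 := hcb x
    have h2 := hcb' x
    omega
  exact ⟨monic_eq_of_nf_eq ha ha' (Multiset.ext.mpr fun x => (key x).1),
    monic_eq_of_nf_eq hb hb' (Multiset.ext.mpr fun x => (key x).2)⟩

section Counting

variable [Fintype F]

omit [DecidableEq F] in
lemma finite_monic_deg (n : ℕ) : Finite {f : F[X] // f.Monic ∧ f.natDegree = n} :=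
  Finite.of_equiv _ ((Polynomial.monicEquivDegreeLT n).trans (Polynomial.degreeLTEquiv F n).toEquiv).symm

omit [DecidableEq F] in
lemma card_monic (n : ℕ) :
    Nat.card {f : F[X] // f.Monic ∧ f.natDegree = n} = Fintype.card F ^ n := by
  rw [Nat.card_congr ((Polynomial.monicEquivDegreeLT n).trans (Polynomial.degreeLTEquiv F n).toEquiv)]
  simp [Nat.card_eq_fintype_card]

omit [DecidableEq F] in
lemma finite_subtype_of (Q : F[X] → Prop) (hm : ∀ f, Q f → f.Monic)
    (N : ℕ) (hN : ∀ f, Q f → f.natDegree ≤ N) : Finite {f : F[X] // Q f} := by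
  have : ∀ n : Fin (N + 1), Finite {f : F[X] // f.Monic ∧ f.natDegree = (n : ℕ)} :=
    fun n => finite_monic_deg _
  refine Finite.of_injective (fun f =>
    (⟨⟨f.1.natDegree, by have := hN f.1 f.2; omega⟩, ⟨f.1, hm f.1 f.2, rfl⟩⟩ :
      Σ n : Fin (N + 1), {g : F[X] // g.Monic ∧ g.natDegree = (n : ℕ)})) ?_
  intro f g h
  have : f.1 = g.1 := by
    have h2 := congrArg (fun x => x.2.1.1) h
    simpa using h2
  exact Subtype.ext this

lemma nat_card_sigma {ι : Type*} [Fintype ι] (α : ι → Type*) [∀ i, Finite (α i)] :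
    Nat.card (Σ i, α i) = ∑ i, Nat.card (α i) := by
  classical
  have := fun i => Fintype.ofFinite (α i)
  simp [Nat.card_eq_fintype_card, Fintype.card_sigma]

omit [DecidableEq F] in
lemma card_fiber (Q : F[X] → Prop) (w m : ℕ) (hw : w ≠ 0) :
    Nat.card {f : F[X] // Q f ∧ w * f.natDegree = m} =
      if w ∣ m then Nat.card {f : F[X] // Q f ∧ f.natDegree = m / w} else 0 := by
  split_ifs with h
  · apply Nat.card_congr
    apply Equiv.subtypeEquivRight
    intro f
    obtain ⟨k, rfl⟩ := h
    rw [Nat.mul_div_cancel_left k (Nat.pos_of_ne_zero hw)]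
    constructor
    · rintro ⟨h1, h2⟩
      exact ⟨h1, Nat.eq_of_mul_eq_mul_left (Nat.pos_of_ne_zero hw) h2⟩
    · rintro ⟨h1, h2⟩; exact ⟨h1, by rw [h2]⟩
  · have : IsEmpty {f : F[X] // Q f ∧ w * f.natDegree = m} := by
      constructor; rintro ⟨f, -, h2⟩; exact h ⟨f.natDegree, h2.symm⟩
    exact Nat.card_of_isEmpty

/-- Main convolution counting lemma for pairs. -/
lemma nat_card_pairs (Q₁ Q₂ : F[X] → Prop) (h₁ : ∀ f, Q₁ f → f.Monic) (h₂ : ∀ f, Q₂ f → f.Monic)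
    (w₁ w₂ : ℕ) (hw₁ : w₁ ≠ 0) (hw₂ : w₂ ≠ 0) (n : ℕ) :
    Nat.card {p : F[X] × F[X] // (Q₁ p.1 ∧ Q₂ p.2) ∧
        w₁ * p.1.natDegree + w₂ * p.2.natDegree = n} =
      ∑ ij ∈ Finset.HasAntidiagonal.antidiagonal n,
        Nat.card {f : F[X] // Q₁ f ∧ w₁ * f.natDegree = ij.1} *
          Nat.card {f : F[X] // Q₂ f ∧ w₂ * f.natDegree = ij.2} := by
  classical
  have hfib : ∀ m : ℕ, ∀ w : ℕ, w ≠ 0 → ∀ Q : F[X] → Prop, (∀ f, Q f → f.Monic) →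
      Finite {f : F[X] // Q f ∧ w * f.natDegree = m} := by
    intro m w hw Q hQ
    exact finite_subtype_of _ (fun f hf => hQ f hf.1) m
      (fun f hf => by have := hf.2; have := Nat.pos_of_ne_zero hw; nlinarith)
  have e : {p : F[X] × F[X] // (Q₁ p.1 ∧ Q₂ p.2) ∧
        w₁ * p.1.natDegree + w₂ * p.2.natDegree = n} ≃
      Σ ij : Finset.HasAntidiagonal.antidiagonal n, {p : F[X] × F[X] //
        (Q₁ p.1 ∧ w₁ * p.1.natDegree = ij.1.1) ∧ (Q₂ p.2 ∧ w₂ * p.2.natDegree = ij.1.2)} := by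
    refine
      { toFun := fun p => ⟨⟨(w₁ * p.1.1.natDegree, w₂ * p.1.2.natDegree),
          Finset.HasAntidiagonal.mem_antidiagonal.mpr p.2.2⟩, ⟨p.1, ⟨p.2.1.1, rfl⟩, ⟨p.2.1.2, rfl⟩⟩⟩
        invFun := fun x => ⟨x.2.1, ⟨x.2.2.1.1, x.2.2.2.1⟩, by
          have h1 := x.2.2.1.2
          have h2 := x.2.2.2.2
          have h3 := Finset.HasAntidiagonal.mem_antidiagonal.mp x.1.2
          omega⟩
        left_inv := fun p => rfl
        right_inv := fun x => ?_ }
    obtain ⟨⟨⟨i, j⟩, hij⟩, ⟨p, ⟨hq1, hd1⟩, ⟨hq2, hd2⟩⟩⟩ := x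
    dsimp only at hd1 hd2
    subst hd1
    subst hd2
    rfl
  rw [Nat.card_congr e]
  have : ∀ ij : Finset.HasAntidiagonal.antidiagonal n, Finite {p : F[X] × F[X] //
      (Q₁ p.1 ∧ w₁ * p.1.natDegree = ij.1.1) ∧ (Q₂ p.2 ∧ w₂ * p.2.natDegree = ij.1.2)} := by
    intro ij
    have f1 := hfib ij.1.1 w₁ hw₁ Q₁ h₁
    have f2 := hfib ij.1.2 w₂ hw₂ Q₂ h₂
    exact Finite.of_equiv _ (Equiv.subtypeProdEquivProd (p := fun f => Q₁ f ∧ w₁ * f.natDegree = ij.1.1)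
      (q := fun f => Q₂ f ∧ w₂ * f.natDegree = ij.1.2)).symm
  rw [nat_card_sigma]
  rw [← Finset.sum_attach (Finset.HasAntidiagonal.antidiagonal n)]
  congr 1
  funext ij
  rw [Nat.card_congr (Equiv.subtypeProdEquivProd (p := fun f => Q₁ f ∧ w₁ * f.natDegree = ij.1.1)
      (q := fun f => Q₂ f ∧ w₂ * f.natDegree = ij.1.2)), Nat.card_prod]

end Counting

section Equivs

/-- squarefree-part decomposition as an equivalence. -/
noncomputable def sqfreePairsEquiv (n : ℕ) :
    {p : F[X] × F[X] // ((p.1.Monic ∧ Squarefree p.1) ∧ p.2.Monic) ∧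
        1 * p.1.natDegree + 2 * p.2.natDegree = n} ≃
      {f : F[X] // f.Monic ∧ f.natDegree = n} := by
  apply Equiv.ofBijective (fun p => ⟨p.1.1 * p.1.2 ^ 2, by
    obtain ⟨⟨s, g⟩, ⟨⟨hsm, hssq⟩, hgm⟩, hdeg⟩ := p
    refine ⟨hsm.mul (hgm.pow 2), ?_⟩
    rw [hsm.natDegree_mul (hgm.pow 2), natDegree_pow]
    omega⟩)
  constructor
  · rintro ⟨⟨s, g⟩, ⟨⟨hsm, hssq⟩, hgm⟩, hdeg⟩ ⟨⟨s', g'⟩, ⟨⟨hsm', hssq'⟩, hgm'⟩, hdeg'⟩ h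
    have h2 : s * g ^ 2 = s' * g' ^ 2 := congrArg Subtype.val h
    obtain ⟨e1, e2⟩ := sqfree_decomp_unique hsm hssq hgm hsm' hssq' hgm' h2
    subst e1; subst e2; rfl
  · rintro ⟨f, hfm, hfd⟩
    obtain ⟨s, g, hsm, hssq, hgm, hfe⟩ := exists_sqfree_decomp f.natDegree f hfm rfl
    refine ⟨⟨(s, g), ⟨⟨hsm, hssq⟩, hgm⟩, ?_⟩, ?_⟩
    · have : f.natDegree = s.natDegree + 2 * g.natDegree := by
        rw [hfe, hsm.natDegree_mul (hgm.pow 2), natDegree_pow]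
      dsimp only
      omega
    · exact Subtype.ext hfe.symm

/-- squarefull decomposition as an equivalence. -/
noncomputable def sqfullPairsEquiv (n : ℕ) :
    {p : F[X] × F[X] // (p.1.Monic ∧ (p.2.Monic ∧ Squarefree p.2)) ∧
        2 * p.1.natDegree + 3 * p.2.natDegree = n} ≃
      {f : F[X] // f.Monic ∧ f.natDegree = n ∧ IsSquareFullPoly f} := by
  apply Equiv.ofBijective (fun p => ⟨p.1.1 ^ 2 * p.1.2 ^ 3, by
    obtain ⟨⟨a, b⟩, ⟨ham, hbm, hbsq⟩, hdeg⟩ := p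
    refine ⟨(ham.pow 2).mul (hbm.pow 3), ?_, ?_⟩
    · rw [(ham.pow 2).natDegree_mul (hbm.pow 3), natDegree_pow, natDegree_pow]
      omega
    · exact isSquareFullPoly_sq_mul_cube a b ham.ne_zero hbm.ne_zero⟩)
  constructor
  · rintro ⟨⟨a, b⟩, ⟨ham, hbm, hbsq⟩, hdeg⟩ ⟨⟨a', b'⟩, ⟨ham', hbm', hbsq'⟩, hdeg'⟩ h
    have h2 : a ^ 2 * b ^ 3 = a' ^ 2 * b' ^ 3 := congrArg Subtype.val h
    obtain ⟨e1, e2⟩ := sqfull_decomp_unique ham hbm hbsq ham' hbm' hbsq' h2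
    subst e1; subst e2; rfl
  · rintro ⟨f, hfm, hfd, hfsf⟩
    obtain ⟨a, b, ham, hbm, hbsq, hfe⟩ := exists_sqfull_decomp f.natDegree f hfm hfsf rfl
    refine ⟨⟨(a, b), ⟨ham, hbm, hbsq⟩, ?_⟩, ?_⟩
    · have : f.natDegree = 2 * a.natDegree + 3 * b.natDegree := by
        rw [hfe, (ham.pow 2).natDegree_mul (hbm.pow 3), natDegree_pow, natDegree_pow]
      dsimp only
      omega
    · exact Subtype.ext hfe.symm

end Equivs

section CountIdentities

variable [Fintype F]

lemma count_identity_one (n : ℕ) :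
    Fintype.card F ^ n = ∑ ij ∈ Finset.HasAntidiagonal.antidiagonal n,
      Nat.card {f : F[X] // (f.Monic ∧ Squarefree f) ∧ f.natDegree = ij.1} *
        (if 2 ∣ ij.2 then Fintype.card F ^ (ij.2 / 2) else 0) := by
  rw [← card_monic (F := F) n, ← Nat.card_congr (sqfreePairsEquiv n),
    nat_card_pairs (fun f => f.Monic ∧ Squarefree f) (fun f => f.Monic)
      (fun f hf => hf.1) (fun f hf => hf) 1 2 one_ne_zero two_ne_zero n]
  apply Finset.sum_congr rfl
  intro ij _
  rw [card_fiber _ 1 _ one_ne_zero, card_fiber _ 2 _ two_ne_zero]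
  simp only [one_dvd, if_true, Nat.div_one]
  congr 1
  split_ifs with h
  · exact card_monic _
  · rfl

lemma count_identity_two (n : ℕ) :
    Nat.card {f : F[X] // f.Monic ∧ f.natDegree = n ∧ IsSquareFullPoly f} =
      ∑ ij ∈ Finset.HasAntidiagonal.antidiagonal n,
        (if 2 ∣ ij.1 then Fintype.card F ^ (ij.1 / 2) else 0) *
          (if 3 ∣ ij.2 then
            Nat.card {f : F[X] // (f.Monic ∧ Squarefree f) ∧ f.natDegree = ij.2 / 3} else 0) := by
  rw [← Nat.card_congr (sqfullPairsEquiv n),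
    nat_card_pairs (fun f => f.Monic) (fun f => f.Monic ∧ Squarefree f)
      (fun f hf => hf) (fun f hf => hf.1) 2 3 two_ne_zero three_ne_zero n]
  apply Finset.sum_congr rfl
  intro ij _
  rw [card_fiber _ 2 _ two_ne_zero, card_fiber _ 3 _ three_ne_zero]
  congr 1
  split_ifs with h
  · exact card_monic _
  · rfl

end CountIdentities

section PS

open PowerSeries

lemma ps_coeff_one_sub (c : ℚ) (k n : ℕ) :
    (PowerSeries.coeff n) (1 - PowerSeries.C c * PowerSeries.X ^ k) =
      (if n = 0 then 1 else 0) - (if n = k then c else 0) := by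
  rw [map_sub, PowerSeries.coeff_one, PowerSeries.coeff_C_mul_X_pow]

lemma ps_geom (c : ℚ) (k : ℕ) (hk : k ≠ 0) :
    (PowerSeries.mk fun n => if k ∣ n then c ^ (n / k) else 0) *
      (1 - PowerSeries.C c * PowerSeries.X ^ k) = 1 := by
  set φ := PowerSeries.mk fun n => if k ∣ n then c ^ (n / k) else (0 : ℚ) with hφ
  have expand : φ * (1 - PowerSeries.C c * PowerSeries.X ^ k)
      = φ - PowerSeries.C c * (φ * PowerSeries.X ^ k) := by ring
  rw [expand]
  ext n
  rw [map_sub, PowerSeries.coeff_C_mul, PowerSeries.coeff_mul_X_pow', PowerSeries.coeff_one]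
  simp only [hφ, PowerSeries.coeff_mk]
  by_cases h0 : n = 0
  · subst h0
    rw [if_pos (dvd_zero k), if_neg (show ¬k ≤ 0 by omega), if_pos rfl]
    simp
  · rw [if_neg h0]
    by_cases hkn : k ≤ n
    · rw [if_pos hkn]
      by_cases hdvd : k ∣ n
      · have hdvd' : k ∣ n - k := Nat.dvd_sub hdvd dvd_rfl
        rw [if_pos hdvd, if_pos hdvd']
        obtain ⟨m, rfl⟩ := hdvd
        have hm : 1 ≤ m := by
          rcases Nat.eq_zero_or_pos m with rfl | h
          · simp at h0
          · exact h
        obtain ⟨m', rfl⟩ : ∃ m', m = m' + 1 := ⟨m - 1, by omega⟩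
        have e1 : k * (m' + 1) - k = k * m' := by simp [Nat.mul_succ]
        rw [e1, Nat.mul_div_cancel_left _ (Nat.pos_of_ne_zero hk),
          Nat.mul_div_cancel_left _ (Nat.pos_of_ne_zero hk), pow_succ]
        ring
      · have hnd : ¬k ∣ n - k := fun hd => hdvd (by
          have h2 := Nat.dvd_add hd (dvd_refl k)
          rwa [Nat.sub_add_cancel hkn] at h2)
        rw [if_neg hdvd, if_neg hnd]
        ring
    · rw [if_neg hkn]
      have hdvd : ¬k ∣ n := fun hd => hkn (Nat.le_of_dvd (by omega) hd)
      rw [if_neg hdvd]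
      ring

end PS

/-- The generating function of the number of monic square-full polynomials of degree `n`
over `F_q` equals `Z(u²)Z(u³)/Z(u⁶)` where `Z(u) = 1/(1-qu)`. -/
theorem squarefull_generating_function (F : Type) [Field F] [Fintype F] :
    (PowerSeries.mk fun n =>
        (Nat.card {f : Polynomial F // f.Monic ∧ f.natDegree = n ∧ IsSquareFullPoly f} : ℚ)) =
      (1 - PowerSeries.C ((Fintype.card F : ℚ)) * PowerSeries.X ^ 2)⁻¹ *
        (1 - PowerSeries.C ((Fintype.card F : ℚ)) * PowerSeries.X ^ 3)⁻¹ *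
        (1 - PowerSeries.C ((Fintype.card F : ℚ)) * PowerSeries.X ^ 6) := by
  classical
  set q : ℚ := (Fintype.card F : ℚ) with hq
  set A : PowerSeries ℚ := PowerSeries.mk fun n =>
    (Nat.card {f : Polynomial F // f.Monic ∧ f.natDegree = n ∧ IsSquareFullPoly f} : ℚ) with hA
  set S : PowerSeries ℚ := PowerSeries.mk fun n =>
    (Nat.card {f : Polynomial F // (f.Monic ∧ Squarefree f) ∧ f.natDegree = n} : ℚ) with hSdef
  set E2 : PowerSeries ℚ := PowerSeries.mk fun n => if 2 ∣ n then q ^ (n / 2) else 0 with hE2def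
  set T3 : PowerSeries ℚ := PowerSeries.mk fun n =>
    if 3 ∣ n then (Nat.card {f : Polynomial F //
      (f.Monic ∧ Squarefree f) ∧ f.natDegree = n / 3} : ℚ) else 0 with hT3def
  set MN : PowerSeries ℚ := PowerSeries.mk fun n => q ^ n with hMNdef
  -- geometric series identities
  have hMN : MN * (1 - PowerSeries.C q * PowerSeries.X) = 1 := by
    have h := ps_geom q 1 one_ne_zero
    rw [pow_one] at h
    have e : MN = PowerSeries.mk fun n => if 1 ∣ n then q ^ (n / 1) else 0 := by
      rw [hMNdef]
      ext n
      simp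
    rw [e, h]
  have hE2 : E2 * (1 - PowerSeries.C q * PowerSeries.X ^ 2) = 1 := ps_geom q 2 two_ne_zero
  -- convolution identity 1 : MN = S * E2
  have hconv1 : MN = S * E2 := by
    ext n
    rw [hMNdef, PowerSeries.coeff_mk, PowerSeries.coeff_mul]
    have h := count_identity_one (F := F) n
    have h2 : ((Fintype.card F ^ n : ℕ) : ℚ) = ∑ ij ∈ Finset.HasAntidiagonal.antidiagonal n,
        (Nat.card {f : Polynomial F // (f.Monic ∧ Squarefree f) ∧ f.natDegree = ij.1} : ℚ) *
          (if 2 ∣ ij.2 then (Fintype.card F : ℚ) ^ (ij.2 / 2) else 0) := by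
      rw [h]
      push_cast [apply_ite (Nat.cast : ℕ → ℚ)]
      rfl
    rw [show (q ^ n : ℚ) = ((Fintype.card F ^ n : ℕ) : ℚ) by push_cast [hq]; ring, h2]
    apply Finset.sum_congr rfl
    intro ij _
    rw [hSdef, hE2def, PowerSeries.coeff_mk, PowerSeries.coeff_mk]
  -- convolution identity 2 : A = E2 * T3
  have hconv2 : A = E2 * T3 := by
    ext n
    rw [hA, PowerSeries.coeff_mk, PowerSeries.coeff_mul]
    have h := count_identity_two (F := F) n
    have h2 : ((Nat.card {f : Polynomial F //
          f.Monic ∧ f.natDegree = n ∧ IsSquareFullPoly f} : ℕ) : ℚ) =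
        ∑ ij ∈ Finset.HasAntidiagonal.antidiagonal n,
          (if 2 ∣ ij.1 then (Fintype.card F : ℚ) ^ (ij.1 / 2) else 0) *
            (if 3 ∣ ij.2 then (Nat.card {f : Polynomial F //
              (f.Monic ∧ Squarefree f) ∧ f.natDegree = ij.2 / 3} : ℚ) else 0) := by
      rw [h]
      push_cast [apply_ite (Nat.cast : ℕ → ℚ)]
      rfl
    rw [h2]
    apply Finset.sum_congr rfl
    intro ij _
    rw [hE2def, hT3def, PowerSeries.coeff_mk, PowerSeries.coeff_mk]
  -- S * (1 - qX) = 1 - qX²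
  have hS : S * (1 - PowerSeries.C q * PowerSeries.X) =
      1 - PowerSeries.C q * PowerSeries.X ^ 2 := by
    have hS' : S = MN * (1 - PowerSeries.C q * PowerSeries.X ^ 2) := by
      calc S = S * (E2 * (1 - PowerSeries.C q * PowerSeries.X ^ 2)) := by rw [hE2, mul_one]
      _ = (S * E2) * (1 - PowerSeries.C q * PowerSeries.X ^ 2) := by ring
      _ = MN * (1 - PowerSeries.C q * PowerSeries.X ^ 2) := by rw [← hconv1]
    calc S * (1 - PowerSeries.C q * PowerSeries.X)
        = (MN * (1 - PowerSeries.C q * PowerSeries.X)) *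
          (1 - PowerSeries.C q * PowerSeries.X ^ 2) := by rw [hS']; ring
      _ = 1 - PowerSeries.C q * PowerSeries.X ^ 2 := by rw [hMN, one_mul]
  -- coefficient form of hS
  have hSc : ∀ m : ℕ, (PowerSeries.coeff m) S -
      q * (if 1 ≤ m then (PowerSeries.coeff (m - 1)) S else 0) =
      (if m = 0 then 1 else 0) - (if m = 2 then q else 0) := by
    intro m
    have e : S * (1 - PowerSeries.C q * PowerSeries.X) =
        S - PowerSeries.C q * (S * PowerSeries.X ^ 1) := by ring
    have h := congrArg (PowerSeries.coeff m) (e ▸ hS)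
    rwa [map_sub, PowerSeries.coeff_C_mul, PowerSeries.coeff_mul_X_pow',
      ps_coeff_one_sub] at h
  -- T3 * (1 - qX³) = 1 - qX⁶
  have hT3 : T3 * (1 - PowerSeries.C q * PowerSeries.X ^ 3) =
      1 - PowerSeries.C q * PowerSeries.X ^ 6 := by
    have e : T3 * (1 - PowerSeries.C q * PowerSeries.X ^ 3) =
        T3 - PowerSeries.C q * (T3 * PowerSeries.X ^ 3) := by ring
    rw [e]
    ext n
    rw [map_sub, PowerSeries.coeff_C_mul, PowerSeries.coeff_mul_X_pow', ps_coeff_one_sub,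
      hT3def, PowerSeries.coeff_mk, PowerSeries.coeff_mk]
    by_cases hd : 3 ∣ n
    · obtain ⟨m, rfl⟩ := hd
      rw [if_pos (Dvd.intro m rfl), Nat.mul_div_cancel_left m (by norm_num)]
      rcases m with _ | m
      · have h0 := hSc 0
        rw [if_neg (by omega : ¬(1:ℕ) ≤ 0)] at h0
        rw [hSdef, PowerSeries.coeff_mk] at h0
        norm_num at h0
        norm_num [h0]
      · have h1 := hSc (m + 1)
        rw [if_pos (by omega : 1 ≤ m + 1)] at h1
        simp only [Nat.add_sub_cancel] at h1
        rw [hSdef, PowerSeries.coeff_mk, PowerSeries.coeff_mk] at h1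
        have e1 : 3 * (m + 1) - 3 = 3 * m := by omega
        have e2 : 3 * m / 3 = m := by omega
        rw [if_pos (by omega : 3 ≤ 3 * (m + 1)), e1, if_pos (Dvd.intro m rfl), e2]
        rw [sub_eq_iff_eq_add] at h1
        rw [h1]
        by_cases hm2 : m = 1
        · subst hm2
          norm_num
        · rw [if_neg (by omega : ¬m + 1 = 0), if_neg (by omega : ¬m + 1 = 2),
            if_neg (by omega : ¬3 * (m + 1) = 0), if_neg (by omega : ¬3 * (m + 1) = 6)]
          ring
    · rw [if_neg hd]
      have hn0 : n ≠ 0 := fun h => hd (h ▸ dvd_zero 3)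
      have hn6 : n ≠ 6 := fun h => hd (h ▸ (by norm_num))
      rw [if_neg hn0, if_neg hn6]
      by_cases h3 : 3 ≤ n
      · have hnd : ¬3 ∣ n - 3 := fun hdd => hd (by
          have h2 := Nat.dvd_add hdd (dvd_refl 3)
          rwa [Nat.sub_add_cancel h3] at h2)
        rw [if_pos h3, if_neg hnd]
        ring
      · rw [if_neg h3]
        ring
  -- final assembly
  have key : A * ((1 - PowerSeries.C q * PowerSeries.X ^ 2) *
      (1 - PowerSeries.C q * PowerSeries.X ^ 3)) =
      1 - PowerSeries.C q * PowerSeries.X ^ 6 := by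
    calc A * ((1 - PowerSeries.C q * PowerSeries.X ^ 2) *
        (1 - PowerSeries.C q * PowerSeries.X ^ 3))
        = (E2 * (1 - PowerSeries.C q * PowerSeries.X ^ 2)) *
          (T3 * (1 - PowerSeries.C q * PowerSeries.X ^ 3)) := by rw [hconv2]; ring
      _ = 1 - PowerSeries.C q * PowerSeries.X ^ 6 := by rw [hE2, hT3, one_mul]
  have hc2 : PowerSeries.constantCoeff (1 - PowerSeries.C q * PowerSeries.X ^ 2) ≠ 0 := by
    simp
  have hc3 : PowerSeries.constantCoeff (1 - PowerSeries.C q * PowerSeries.X ^ 3) ≠ 0 := by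
    simp
  rw [eq_comm, ← key]
  calc (1 - PowerSeries.C q * PowerSeries.X ^ 2)⁻¹ *
      (1 - PowerSeries.C q * PowerSeries.X ^ 3)⁻¹ *
      (A * ((1 - PowerSeries.C q * PowerSeries.X ^ 2) *
        (1 - PowerSeries.C q * PowerSeries.X ^ 3)))
      = A * ((1 - PowerSeries.C q * PowerSeries.X ^ 2)⁻¹ *
          (1 - PowerSeries.C q * PowerSeries.X ^ 2)) *
        ((1 - PowerSeries.C q * PowerSeries.X ^ 3)⁻¹ *
          (1 - PowerSeries.C q * PowerSeries.X ^ 3)) := by ring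
    _ = A := by
        rw [PowerSeries.inv_mul_cancel _ hc2, PowerSeries.inv_mul_cancel _ hc3, mul_one, mul_one]
end

section
/- Let Q ∈ F_q[T] be a prime polynomial and let χ_2 be the quadratic character modulo Q (q odd). Then the coefficient of u^n in L(u^3, χ_2) · Z(u^2)(1 - u^{2 deg Q}) / (Z(u^6)(1 - u^{6 deg Q})) equals Σ_{f ∈ M_n} α_2(f) χ_2(f), where α_2 is the indicator of square-full polynomials. -/
/-- The `n`-th coefficient of the L-function of a character `χ` mod `Q`:
`Σ_{f ∈ M_n} χ(f)`. -/
noncomputable def Mcoeff {F : Type} [Field F] [Fintype F] (Q : Polynomial F)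
    (χ : MulChar (Polynomial F ⧸ Ideal.span {Q}) ℂ) (n : ℕ) : ℂ :=
  ∑ᶠ f : {f : Polynomial F // f.Monic ∧ f.natDegree = n},
    χ (Ideal.Quotient.mk (Ideal.span {Q}) f.1)

/-- The power series `L(u^k, χ)`. -/
noncomputable def Lpow {F : Type} [Field F] [Fintype F] (Q : Polynomial F)
    (χ : MulChar (Polynomial F ⧸ Ideal.span {Q}) ℂ) (k : ℕ) : PowerSeries ℂ :=
  PowerSeries.mk fun n => if k ∣ n then Mcoeff Q χ (n / k) else 0

namespace QCGF

open Polynomial PowerSeries Finset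

variable {F : Type} [Field F] [Fintype F]

/-! ### Finiteness and counting -/

lemma monic_set_finite (n : ℕ) : {f : F[X] | f.Monic ∧ f.natDegree = n}.Finite := by
  have : Finite {f : F[X] // f.Monic ∧ f.natDegree = n} :=
    Finite.of_equiv _ ((Polynomial.monicEquivDegreeLT n).trans
      (Polynomial.degreeLTEquiv F n).toEquiv).symm
  exact Set.finite_coe_iff.mp this

lemma card_monic (n : ℕ) : Nat.card {f : F[X] // f.Monic ∧ f.natDegree = n}
    = Fintype.card F ^ n := by
  rw [Nat.card_congr ((Polynomial.monicEquivDegreeLT n).trans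
      (Polynomial.degreeLTEquiv F n).toEquiv)]
  simp [Nat.card_eq_fintype_card]

/-- Finset of monic polynomials with `k * natDegree = n` (empty junk for `k = 0`). -/
noncomputable def MS (k n : ℕ) : Finset F[X] :=
  if hk : k = 0 then ∅ else
    Set.Finite.toFinset (s := {f : F[X] | f.Monic ∧ k * f.natDegree = n})
      ((monic_set_finite (n / k)).subset (by
        rintro f ⟨h1, h2⟩
        exact ⟨h1, by rw [← h2, Nat.mul_div_cancel_left _ (Nat.pos_of_ne_zero hk)]⟩))

lemma mem_MS {k n : ℕ} (hk : k ≠ 0) {f : F[X]} :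
    f ∈ (MS k n : Finset F[X]) ↔ f.Monic ∧ k * f.natDegree = n := by
  rw [MS, dif_neg hk, Set.Finite.mem_toFinset]; rfl

/-- Finset of monic squarefree polynomials with `k * natDegree = n`. -/
noncomputable def SFS (k n : ℕ) : Finset F[X] :=
  if hk : k = 0 then ∅ else
    Set.Finite.toFinset (s := {f : F[X] | (f.Monic ∧ Squarefree f) ∧ k * f.natDegree = n})
      ((monic_set_finite (n / k)).subset (by
        rintro f ⟨⟨h1, _⟩, h2⟩
        exact ⟨h1, by rw [← h2, Nat.mul_div_cancel_left _ (Nat.pos_of_ne_zero hk)]⟩))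

lemma mem_SFS {k n : ℕ} (hk : k ≠ 0) {f : F[X]} :
    f ∈ (SFS k n : Finset F[X]) ↔ (f.Monic ∧ Squarefree f) ∧ k * f.natDegree = n := by
  rw [SFS, dif_neg hk, Set.Finite.mem_toFinset]; rfl

/-- Finset of monic square-full polynomials of degree `n`. -/
noncomputable def SQS (n : ℕ) : Finset F[X] :=
  Set.Finite.toFinset (s := {f : F[X] | (f.Monic ∧ IsSquareFullPoly f) ∧ f.natDegree = n})
    ((monic_set_finite n).subset (by rintro f ⟨⟨h1, _⟩, h2⟩; exact ⟨h1, h2⟩))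

lemma mem_SQS {n : ℕ} {f : F[X]} :
    f ∈ (SQS n : Finset F[X]) ↔ (f.Monic ∧ IsSquareFullPoly f) ∧ f.natDegree = n := by
  rw [SQS, Set.Finite.mem_toFinset]; rfl

variable (Q : F[X])

lemma Mcoeff_eq (χ : MulChar (Polynomial F ⧸ Ideal.span {Q}) ℂ) (m : ℕ) :
    Mcoeff Q χ m = ∑ f ∈ (monic_set_finite (F := F) m).toFinset,
      χ (Ideal.Quotient.mk (Ideal.span {Q}) f) := by
  rw [Mcoeff,
    finsum_subtype_eq_finsum_cond (f := fun f => χ (Ideal.Quotient.mk (Ideal.span {Q}) f))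
      (fun f : F[X] => f.Monic ∧ f.natDegree = m)]
  exact finsum_mem_eq_finite_toFinset_sum _ (monic_set_finite m)

lemma coeff_Lpow (χ : MulChar (Polynomial F ⧸ Ideal.span {Q}) ℂ) {k : ℕ} (hk : k ≠ 0) (n : ℕ) :
    PowerSeries.coeff n (Lpow Q χ k)
      = ∑ f ∈ (MS k n : Finset F[X]), χ (Ideal.Quotient.mk (Ideal.span {Q}) f) := by
  rw [Lpow, coeff_mk]
  by_cases h : k ∣ n
  · rw [if_pos h, Mcoeff_eq]
    apply Finset.sum_congr _ (fun _ _ => rfl)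
    ext f
    rw [Set.Finite.mem_toFinset, mem_MS hk]
    constructor
    · rintro ⟨h1, h2⟩
      exact ⟨h1, by rw [h2]; exact Nat.mul_div_cancel' h⟩
    · rintro ⟨h1, h2⟩
      exact ⟨h1, by rw [← h2, Nat.mul_div_cancel_left _ (Nat.pos_of_ne_zero hk)]⟩
  · rw [if_neg h]
    rw [Finset.eq_empty_of_forall_notMem (s := (MS k n : Finset F[X]))
      (fun f hf => h (((mem_MS hk).mp hf).2 ▸ Dvd.intro _ rfl)), Finset.sum_empty]


/-! ### Counting monic polynomials -/

lemma card_MF (m : ℕ) :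
    ((monic_set_finite (F := F) m).toFinset).card = Fintype.card F ^ m := by
  rw [← Set.ncard_eq_toFinset_card _ (monic_set_finite (F := F) m), ← Nat.card_coe_set_eq]
  exact card_monic m

open scoped Classical in
lemma one_apply_mk (hQ : Irreducible Q) (f : F[X]) :
    (1 : MulChar (F[X] ⧸ Ideal.span {Q}) ℂ) (Ideal.Quotient.mk (Ideal.span {Q}) f)
      = if Q ∣ f then 0 else 1 := by
  haveI : (Ideal.span {Q}).IsMaximal := PrincipalIdealRing.isMaximal_of_irreducible hQ
  letI : Field (F[X] ⧸ Ideal.span {Q}) := Ideal.Quotient.field _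
  have key : IsUnit (Ideal.Quotient.mk (Ideal.span {Q}) f) ↔ ¬ Q ∣ f := by
    rw [isUnit_iff_ne_zero, ne_eq, Ideal.Quotient.eq_zero_iff_mem, Ideal.mem_span_singleton]
  by_cases h : Q ∣ f
  · rw [if_pos h, MulChar.map_nonunit _ (by rw [key]; exact not_not_intro h)]
  · rw [if_neg h, MulChar.one_apply (key.mpr h)]

open scoped Classical in
lemma card_MF_dvd (hQ : Irreducible Q) (m : ℕ) :
    (((monic_set_finite (F := F) m).toFinset).filter (Q ∣ ·)).card
      = if Q.natDegree ≤ m then Fintype.card F ^ (m - Q.natDegree) else 0 := by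
  have hQ0 : Q ≠ 0 := hQ.ne_zero
  set Qm : F[X] := Q * Polynomial.C (Q.leadingCoeff)⁻¹ with hQm
  have hQmm : Qm.Monic := monic_mul_leadingCoeff_inv hQ0
  have hassoc : Associated Q Qm := by
    apply associated_mul_unit_right
    exact (isUnit_C).mpr ((inv_ne_zero (leadingCoeff_ne_zero.mpr hQ0)).isUnit)
  have hdeg : Qm.natDegree = Q.natDegree := natDegree_mul_leadingCoeff_inv _ hQ0
  by_cases hm : Q.natDegree ≤ m
  · rw [if_pos hm]
    rw [← card_MF (m - Q.natDegree)]
    apply (Finset.card_bij (fun g _ => Qm * g) ?_ ?_ ?_).symm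
    · intro g hg
      rw [Set.Finite.mem_toFinset] at hg
      rw [Finset.mem_filter, Set.Finite.mem_toFinset]
      refine ⟨⟨hQmm.mul hg.1, ?_⟩, hassoc.dvd_iff_dvd_left.mpr (dvd_mul_right _ _)⟩
      rw [hQmm.natDegree_mul hg.1, hdeg, hg.2]
      omega
    · intro g₁ hg₁ g₂ hg₂ h
      exact mul_left_cancel₀ hQmm.ne_zero h
    · intro f hf
      rw [Finset.mem_filter, Set.Finite.mem_toFinset] at hf
      obtain ⟨⟨hfm, hfd⟩, hdvd⟩ := hf
      obtain ⟨g, rfl⟩ := hassoc.dvd_iff_dvd_left.mp hdvd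
      have hgm : g.Monic := hQmm.of_mul_monic_left hfm
      refine ⟨g, ?_, rfl⟩
      rw [Set.Finite.mem_toFinset]
      refine ⟨hgm, ?_⟩
      rw [hQmm.natDegree_mul hgm, hdeg] at hfd
      omega
  · rw [if_neg hm]
    rw [Finset.card_eq_zero, Finset.eq_empty_iff_forall_notMem]
    intro f hf
    rw [Finset.mem_filter, Set.Finite.mem_toFinset] at hf
    obtain ⟨⟨hfm, hfd⟩, hdvd⟩ := hf
    exact hm (hfd ▸ Polynomial.natDegree_le_of_dvd hdvd hfm.ne_zero)

open scoped Classical in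
lemma sum_one (hQ : Irreducible Q) (m : ℕ) :
    ∑ f ∈ (monic_set_finite (F := F) m).toFinset,
        (1 : MulChar (F[X] ⧸ Ideal.span {Q}) ℂ) (Ideal.Quotient.mk (Ideal.span {Q}) f)
      = (Fintype.card F : ℂ) ^ m
        - (if Q.natDegree ≤ m then (Fintype.card F : ℂ) ^ (m - Q.natDegree) else 0) := by
  rw [Finset.sum_congr rfl (fun f _ => one_apply_mk Q hQ f)]
  have : ∀ f : F[X], (if Q ∣ f then (0 : ℂ) else 1) = 1 - (if Q ∣ f then 1 else 0) := by
    intro f; split <;> ring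
  rw [Finset.sum_congr rfl (fun f _ => this f), Finset.sum_sub_distrib,
    Finset.sum_const, Finset.sum_boole, card_MF, card_MF_dvd Q hQ]
  simp only [nsmul_eq_mul, mul_one, Nat.cast_pow]
  split <;> simp

/-! ### Geometric series -/

/-- `Z(u^k) = 1/(1 - q u^k)` as a power series. -/
noncomputable def Zk (q : ℂ) (k : ℕ) : PowerSeries ℂ :=
  PowerSeries.mk fun n => if k ∣ n then q ^ (n / k) else 0

lemma Zk_mul (q : ℂ) {k : ℕ} (hk : k ≠ 0) :
    Zk q k * (1 - PowerSeries.C q * PowerSeries.X ^ k) = 1 := by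
  ext n
  rw [mul_sub, mul_one, map_sub, ← mul_assoc, PowerSeries.coeff_mul_X_pow',
    PowerSeries.coeff_mul_C, PowerSeries.coeff_one, Zk, coeff_mk]
  by_cases h : k ∣ n
  · by_cases hn : n = 0
    · subst hn
      simp [Nat.pos_of_ne_zero hk, hk]
    · have hkn : k ≤ n := Nat.le_of_dvd (Nat.pos_of_ne_zero hn) h
      rw [if_pos h, if_pos hkn, coeff_mk, if_pos (Nat.dvd_sub h dvd_rfl), if_neg hn]
      have h1 : (n - k) / k = n / k - 1 := by
        obtain ⟨c, rfl⟩ := h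
        rw [Nat.mul_div_cancel_left _ (Nat.pos_of_ne_zero hk)]
        rw [show k * c - k = k * (c - 1) by rw [Nat.mul_sub, mul_one],
          Nat.mul_div_cancel_left _ (Nat.pos_of_ne_zero hk)]
      have h2 : 1 ≤ n / k := Nat.one_le_div_iff (Nat.pos_of_ne_zero hk) |>.mpr hkn
      rw [h1, sub_eq_zero]
      rw [← pow_succ]
      congr 1
      omega
  · have hn : n ≠ 0 := by rintro rfl; exact h (dvd_zero k)
    rw [if_neg h, if_neg hn]
    by_cases hkn : k ≤ n
    · rw [if_pos hkn, coeff_mk, if_neg (fun hd => h (by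
        have h2 : n = n - k + k := (Nat.sub_add_cancel hkn).symm
        rw [h2]; exact Nat.dvd_add hd (dvd_refl k)))]
      ring
    · rw [if_neg hkn]; ring

lemma Lpow_one_eq (hQ : Irreducible Q) {k : ℕ} (hk : k ≠ 0) :
    Lpow Q (1 : MulChar (F[X] ⧸ Ideal.span {Q}) ℂ) k
      = (1 - PowerSeries.X ^ (k * Q.natDegree)) * Zk (Fintype.card F : ℂ) k := by
  ext n
  rw [Lpow, coeff_mk, sub_mul, one_mul, map_sub, PowerSeries.coeff_X_pow_mul', Zk, coeff_mk]
  by_cases h : k ∣ n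
  · rw [if_pos h, Mcoeff_eq, sum_one Q hQ, if_pos h]
    obtain ⟨c, rfl⟩ := h
    rw [Nat.mul_div_cancel_left _ (Nat.pos_of_ne_zero hk)]
    by_cases hd : Q.natDegree ≤ c
    · rw [if_pos hd, if_pos (by exact Nat.mul_le_mul_left k hd), coeff_mk,
        if_pos ⟨c - Q.natDegree, (Nat.mul_sub k c Q.natDegree).symm⟩,
        show (k * c - k * Q.natDegree) / k = c - Q.natDegree by
          rw [← Nat.mul_sub, Nat.mul_div_cancel_left _ (Nat.pos_of_ne_zero hk)]]
    · rw [if_neg hd, if_neg (by intro hcon; apply hd; exact Nat.le_of_mul_le_mul_left hcon (Nat.pos_of_ne_zero hk))]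
  · rw [if_neg h, if_neg h]
    by_cases hkn : k * Q.natDegree ≤ n
    · rw [if_pos hkn, coeff_mk, if_neg (fun hd => h (by
        have h2 : n = n - k * Q.natDegree + k * Q.natDegree := (Nat.sub_add_cancel hkn).symm
        rw [h2]; exact Nat.dvd_add hd (Dvd.intro Q.natDegree rfl)))]
      ring

    · rw [if_neg hkn]; ring

lemma G1 (hQ : Irreducible Q) {k : ℕ} (hk : k ≠ 0) :
    Lpow Q (1 : MulChar (F[X] ⧸ Ideal.span {Q}) ℂ) k
        * (1 - PowerSeries.C (Fintype.card F : ℂ) * PowerSeries.X ^ k)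
      = 1 - PowerSeries.X ^ (k * Q.natDegree) := by
  rw [Lpow_one_eq Q hQ hk, mul_assoc, Zk_mul _ hk, mul_one]


/-! ### Factorization lemmas -/

lemma exists_monic_irreducible_dvd {f : F[X]} (hf0 : f ≠ 0) (hfu : ¬IsUnit f) :
    ∃ P : F[X], P.Monic ∧ Irreducible P ∧ P ∣ f := by
  obtain ⟨P₀, hirr, hdvd⟩ := WfDvdMonoid.exists_irreducible_factor hfu hf0
  have h0 : P₀ ≠ 0 := hirr.ne_zero
  have hassoc : Associated P₀ (P₀ * Polynomial.C (P₀.leadingCoeff)⁻¹) :=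
    associated_mul_unit_right _ _
      ((Polynomial.isUnit_C).mpr ((inv_ne_zero (Polynomial.leadingCoeff_ne_zero.mpr h0)).isUnit))
  exact ⟨P₀ * Polynomial.C (P₀.leadingCoeff)⁻¹, monic_mul_leadingCoeff_inv h0,
    hassoc.irreducible hirr, hassoc.symm.dvd.trans hdvd⟩

lemma pow_eq_pow_aux {P : F[X]} (hP : Prime P) :
    ∀ m n (u v : F[X]), ¬P ∣ u → ¬P ∣ v → P ^ m * u = P ^ n * v → m = n := by
  intro m
  induction m with
  | zero =>
    intro n u v hu hv h
    cases n with
    | zero => rfl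
    | succ n =>
      exfalso; apply hu
      rw [pow_zero, one_mul] at h
      exact ⟨P ^ n * v, by rw [h, pow_succ']; ring⟩
  | succ m ih =>
    intro n u v hu hv h
    cases n with
    | zero =>
      exfalso; apply hv
      rw [pow_zero, one_mul] at h
      exact ⟨P ^ m * u, by rw [← h, pow_succ']; ring⟩
    | succ n =>
      have h' : P * (P ^ m * u) = P * (P ^ n * v) := by
        rw [← mul_assoc, ← pow_succ', ← mul_assoc, ← pow_succ']; exact h
      rw [ih n u v hu hv (mul_left_cancel₀ hP.ne_zero h')]

lemma exists_sf_sq : ∀ n (f : F[X]), f.Monic → f.natDegree ≤ n →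
    ∃ b c : F[X], b.Monic ∧ c.Monic ∧ Squarefree b ∧ f = b * c ^ 2 := by
  intro n
  induction n using Nat.strong_induction_on with
  | _ n ih =>
    intro f hf hdeg
    by_cases hsf : Squarefree f
    · exact ⟨f, 1, hf, monic_one, hsf, by ring⟩
    · rw [Squarefree] at hsf
      push_neg at hsf
      obtain ⟨x, hxd, hxu⟩ := hsf
      have hx0 : x ≠ 0 := by
        rintro rfl
        rw [mul_zero, zero_dvd_iff] at hxd
        exact hf.ne_zero hxd
      obtain ⟨P, hPm, hPi, hPx⟩ := exists_monic_irreducible_dvd hx0 hxu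
      have hP2 : P ^ 2 ∣ f := by
        rw [sq]; exact (mul_dvd_mul hPx hPx).trans hxd
      obtain ⟨g, hg⟩ := hP2
      have hgm : g.Monic := (hPm.pow 2).of_mul_monic_left (hg ▸ hf)
      have hPd : 1 ≤ P.natDegree := hPi.natDegree_pos
      have hdegf : f.natDegree = 2 * P.natDegree + g.natDegree := by
        rw [hg, (hPm.pow 2).natDegree_mul hgm, hPm.natDegree_pow]
      have hlt : g.natDegree < n := by omega
      obtain ⟨b, c, hb, hc, hsfb, hbc⟩ := ih g.natDegree hlt g hgm le_rfl
      exact ⟨b, P * c, hb, hPm.mul hc, hsfb, by rw [hg, hbc]; ring⟩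

lemma uniq_sf_sq : ∀ n (b₁ c₁ b₂ c₂ : F[X]), b₁.Monic → c₁.Monic → b₂.Monic → c₂.Monic →
    Squarefree b₁ → Squarefree b₂ → b₁ * c₁ ^ 2 = b₂ * c₂ ^ 2 →
    (b₁ * c₁ ^ 2).natDegree ≤ n → b₁ = b₂ ∧ c₁ = c₂ := by
  intro n
  induction n using Nat.strong_induction_on with
  | _ n ih =>
    intro b₁ c₁ b₂ c₂ hb₁ hc₁ hb₂ hc₂ hs₁ hs₂ h hdeg
    have hfm : (b₁ * c₁ ^ 2).Monic := hb₁.mul (hc₁.pow 2)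
    have hdegf : (b₁ * c₁ ^ 2).natDegree = b₁.natDegree + 2 * c₁.natDegree := by
      rw [hb₁.natDegree_mul (hc₁.pow 2), hc₁.natDegree_pow]
    have hdegf' : (b₁ * c₁ ^ 2).natDegree = b₂.natDegree + 2 * c₂.natDegree := by
      rw [h, hb₂.natDegree_mul (hc₂.pow 2), hc₂.natDegree_pow]
    by_cases h0 : (b₁ * c₁ ^ 2).natDegree = 0
    · have e1 : b₁ = 1 := hb₁.natDegree_eq_zero.mp (by omega)
      have e2 : c₁ = 1 := hc₁.natDegree_eq_zero.mp (by omega)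
      have e3 : b₂ = 1 := hb₂.natDegree_eq_zero.mp (by omega)
      have e4 : c₂ = 1 := hc₂.natDegree_eq_zero.mp (by omega)
      exact ⟨e1.trans e3.symm, e2.trans e4.symm⟩
    · have hfu : ¬IsUnit (b₁ * c₁ ^ 2) :=
        fun hu => h0 (Polynomial.natDegree_eq_zero_of_isUnit hu)
      obtain ⟨P, hPm, hPi, hPf⟩ := exists_monic_irreducible_dvd hfm.ne_zero hfu
      have hPp : Prime P := UniqueFactorizationMonoid.irreducible_iff_prime.mp hPi
      have hPd : 1 ≤ P.natDegree := hPi.natDegree_pos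
      have key : ∀ b c b' c' : F[X], Squarefree b' → b * c ^ 2 = b' * c' ^ 2 →
          P ∣ c → ¬P ∣ c' → False := by
        intro b c b' c' hsb' heq hPc hPc'
        have hP2 : P ^ 2 ∣ b' * c' ^ 2 := by
          rw [← heq]
          exact Dvd.dvd.mul_left (pow_dvd_pow_of_dvd hPc 2) b
        have hcop : IsCoprime (P ^ 2) (c' ^ 2) :=
          (hPi.coprime_iff_not_dvd.mpr hPc').pow
        have hP2b : P ^ 2 ∣ b' := hcop.dvd_of_dvd_mul_right hP2
        exact hPi.not_isUnit (hsb' P (by rw [← sq]; exact hP2b))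
      by_cases h₁ : P ∣ c₁ <;> by_cases h₂ : P ∣ c₂
      · obtain ⟨c₁', hc₁'⟩ := h₁
        obtain ⟨c₂', hc₂'⟩ := h₂
        have hc₁'m : c₁'.Monic := hPm.of_mul_monic_left (hc₁' ▸ hc₁)
        have hc₂'m : c₂'.Monic := hPm.of_mul_monic_left (hc₂' ▸ hc₂)
        have hcan : b₁ * c₁' ^ 2 = b₂ * c₂' ^ 2 := by
          apply mul_left_cancel₀ (pow_ne_zero 2 hPm.ne_zero)
          have := h
          rw [hc₁', hc₂'] at this
          calc P ^ 2 * (b₁ * c₁' ^ 2) = b₁ * (P * c₁') ^ 2 := by ring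
            _ = b₂ * (P * c₂') ^ 2 := this
            _ = P ^ 2 * (b₂ * c₂' ^ 2) := by ring
        have hdlt : (b₁ * c₁' ^ 2).natDegree < n := by
          have : (b₁ * c₁' ^ 2).natDegree = b₁.natDegree + 2 * c₁'.natDegree := by
            rw [hb₁.natDegree_mul (hc₁'m.pow 2), hc₁'m.natDegree_pow]
          have hdc : c₁.natDegree = P.natDegree + c₁'.natDegree := by
            rw [hc₁', hPm.natDegree_mul hc₁'m]
          omega
        obtain ⟨e1, e2⟩ := ih _ hdlt b₁ c₁' b₂ c₂' hb₁ hc₁'m hb₂ hc₂'m hs₁ hs₂ hcan le_rfl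
        exact ⟨e1, by rw [hc₁', hc₂', e2]⟩
      · exact absurd (key b₁ c₁ b₂ c₂ hs₂ h h₁ h₂) id
      · exact absurd (key b₂ c₂ b₁ c₁ hs₁ h.symm h₂ h₁) id
      · -- P divides neither c₁ nor c₂, so it divides b₁ and b₂
        have hPb₁ : P ∣ b₁ := by
          rcases hPp.dvd_mul.mp hPf with hd | hd
          · exact hd
          · exact absurd (hPp.dvd_of_dvd_pow hd) h₁
        have hPb₂ : P ∣ b₂ := by
          rcases hPp.dvd_mul.mp (h ▸ hPf) with hd | hd
          · exact hd
          · exact absurd (hPp.dvd_of_dvd_pow hd) h₂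
        obtain ⟨b₁', hb₁'⟩ := hPb₁
        obtain ⟨b₂', hb₂'⟩ := hPb₂
        have hb₁'m : b₁'.Monic := hPm.of_mul_monic_left (hb₁' ▸ hb₁)
        have hb₂'m : b₂'.Monic := hPm.of_mul_monic_left (hb₂' ▸ hb₂)
        have hcan : b₁' * c₁ ^ 2 = b₂' * c₂ ^ 2 := by
          apply mul_left_cancel₀ hPm.ne_zero
          have := h
          rw [hb₁', hb₂'] at this
          calc P * (b₁' * c₁ ^ 2) = P * b₁' * c₁ ^ 2 := by ring
            _ = P * b₂' * c₂ ^ 2 := this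
            _ = P * (b₂' * c₂ ^ 2) := by ring
        have hs₁' : Squarefree b₁' := hs₁.squarefree_of_dvd ⟨P, by rw [hb₁']; ring⟩
        have hs₂' : Squarefree b₂' := hs₂.squarefree_of_dvd ⟨P, by rw [hb₂']; ring⟩
        have hdlt : (b₁' * c₁ ^ 2).natDegree < n := by
          have : (b₁' * c₁ ^ 2).natDegree = b₁'.natDegree + 2 * c₁.natDegree := by
            rw [hb₁'m.natDegree_mul (hc₁.pow 2), hc₁.natDegree_pow]
          have hdb : b₁.natDegree = P.natDegree + b₁'.natDegree := by
            rw [hb₁', hPm.natDegree_mul hb₁'m]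
          omega
        obtain ⟨e1, e2⟩ := ih _ hdlt b₁' c₁ b₂' c₂ hb₁'m hc₁ hb₂'m hc₂ hs₁' hs₂' hcan le_rfl
        exact ⟨by rw [hb₁', hb₂', e1], e2⟩

lemma sqfull_pow_mul (a b : F[X]) : IsSquareFullPoly (a ^ 2 * b ^ 3) := by
  intro P hPi hdvd
  have hPp : Prime P := UniqueFactorizationMonoid.irreducible_iff_prime.mp hPi
  rcases hPp.dvd_mul.mp hdvd with hd | hd
  · exact (pow_dvd_pow_of_dvd (hPp.dvd_of_dvd_pow hd) 2).mul_right _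
  · have hPb : P ∣ b := hPp.dvd_of_dvd_pow hd
    have : P ^ 2 ∣ b ^ 3 :=
      (pow_dvd_pow_of_dvd hPb 2).trans (pow_dvd_pow b (by norm_num))
    exact this.mul_left _

lemma exists_sqfull : ∀ n (f : F[X]), f.Monic → IsSquareFullPoly f → f.natDegree ≤ n →
    ∃ a b : F[X], a.Monic ∧ b.Monic ∧ Squarefree b ∧ f = a ^ 2 * b ^ 3 := by
  intro n
  induction n using Nat.strong_induction_on with
  | _ n ih =>
    intro f hf hsq hdeg
    by_cases h0 : f.natDegree = 0
    · exact ⟨1, 1, monic_one, monic_one, squarefree_one,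
        by rw [hf.natDegree_eq_zero.mp h0]; ring⟩
    · have hfu : ¬IsUnit f := fun hu => h0 (Polynomial.natDegree_eq_zero_of_isUnit hu)
      obtain ⟨P, hPm, hPi, hPf⟩ := exists_monic_irreducible_dvd hf.ne_zero hfu
      have hPp : Prime P := UniqueFactorizationMonoid.irreducible_iff_prime.mp hPi
      have hPd : 1 ≤ P.natDegree := hPi.natDegree_pos
      obtain ⟨e, g, hPg, hfe⟩ := WfDvdMonoid.max_power_factor hf.ne_zero hPi
      have hgm : g.Monic := (hPm.pow e).of_mul_monic_left (hfe ▸ hf)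
      have hP2 : P ^ 2 ∣ f := hsq P hPi hPf
      have he2 : 2 ≤ e := by
        by_contra hcon
        interval_cases e
        · rw [pow_zero, one_mul] at hfe
          exact hPg ((dvd_pow_self P two_ne_zero).trans (hfe ▸ hP2))
        · rw [pow_one] at hfe
          apply hPg
          have : P * P ∣ P * g := by rw [← sq, ← hfe]; exact hP2
          exact (mul_dvd_mul_iff_left hPm.ne_zero).mp this
      have hgsq : IsSquareFullPoly g := by
        intro R hRi hRg
        have hRP : ¬R ∣ P := by
          intro hRP
          exact hPg (((hRi.associated_of_dvd hPi hRP).symm.dvd).trans hRg)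
        have hcop : IsCoprime (R ^ 2) (P ^ e) :=
          (hRi.coprime_iff_not_dvd.mpr hRP).pow
        have hR2f : R ^ 2 ∣ P ^ e * g :=
          hfe ▸ hsq R hRi (hRg.trans ⟨P ^ e, by rw [hfe]; ring⟩)
        exact hcop.dvd_of_dvd_mul_left hR2f
      have hdegf : f.natDegree = e * P.natDegree + g.natDegree := by
        rw [hfe, (hPm.pow e).natDegree_mul hgm, hPm.natDegree_pow]
      have hge : 2 ≤ e * P.natDegree := le_trans he2 (Nat.le_mul_of_pos_right e hPd)
      have hlt : g.natDegree < n := by omega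
      obtain ⟨a, b, ha, hb, hsfb, hgab⟩ := ih g.natDegree hlt g hgm hgsq le_rfl
      have hPb : ¬P ∣ b := by
        intro hd
        exact hPg (hd.trans ⟨a ^ 2 * b ^ 2, by rw [hgab]; ring⟩)
      rcases Nat.even_or_odd e with ⟨t, ht⟩ | ⟨t, ht⟩
      · refine ⟨P ^ t * a, b, (hPm.pow t).mul ha, hb, hsfb, ?_⟩
        rw [hfe, hgab, show e = 2 * t by omega]
        ring
      · have ht1 : 1 ≤ t := by omega
        refine ⟨P ^ (t - 1) * a, P * b, (hPm.pow (t - 1)).mul ha, hPm.mul hb, ?_, ?_⟩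
        · exact squarefree_mul_iff.mpr
            ⟨(hPi.coprime_iff_not_dvd.mpr hPb).isRelPrime, hPi.squarefree, hsfb⟩
        · rw [hfe, hgab, show e = 2 * (t - 1) + 3 by omega]
          ring

lemma uniq_sqfull : ∀ n (a₁ b₁ a₂ b₂ : F[X]), a₁.Monic → b₁.Monic → a₂.Monic → b₂.Monic →
    Squarefree b₁ → Squarefree b₂ → a₁ ^ 2 * b₁ ^ 3 = a₂ ^ 2 * b₂ ^ 3 →
    (a₁ ^ 2 * b₁ ^ 3).natDegree ≤ n → a₁ = a₂ ∧ b₁ = b₂ := by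
  intro n
  induction n using Nat.strong_induction_on with
  | _ n ih =>
    intro a₁ b₁ a₂ b₂ ha₁ hb₁ ha₂ hb₂ hs₁ hs₂ h hdeg
    have hfm : (a₁ ^ 2 * b₁ ^ 3).Monic := (ha₁.pow 2).mul (hb₁.pow 3)
    have hdegf : (a₁ ^ 2 * b₁ ^ 3).natDegree = 2 * a₁.natDegree + 3 * b₁.natDegree := by
      rw [(ha₁.pow 2).natDegree_mul (hb₁.pow 3), ha₁.natDegree_pow, hb₁.natDegree_pow]
    have hdegf' : (a₁ ^ 2 * b₁ ^ 3).natDegree = 2 * a₂.natDegree + 3 * b₂.natDegree := by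
      rw [h, (ha₂.pow 2).natDegree_mul (hb₂.pow 3), ha₂.natDegree_pow, hb₂.natDegree_pow]
    by_cases h0 : (a₁ ^ 2 * b₁ ^ 3).natDegree = 0
    · have e1 : a₁ = 1 := ha₁.natDegree_eq_zero.mp (by omega)
      have e2 : b₁ = 1 := hb₁.natDegree_eq_zero.mp (by omega)
      have e3 : a₂ = 1 := ha₂.natDegree_eq_zero.mp (by omega)
      have e4 : b₂ = 1 := hb₂.natDegree_eq_zero.mp (by omega)
      exact ⟨e1.trans e3.symm, e2.trans e4.symm⟩
    · have hfu : ¬IsUnit (a₁ ^ 2 * b₁ ^ 3) :=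
        fun hu => h0 (Polynomial.natDegree_eq_zero_of_isUnit hu)
      obtain ⟨P, hPm, hPi, hPf⟩ := exists_monic_irreducible_dvd hfm.ne_zero hfu
      have hPp : Prime P := UniqueFactorizationMonoid.irreducible_iff_prime.mp hPi
      have hPd : 1 ≤ P.natDegree := hPi.natDegree_pos
      have key : ∀ a b a' b' : F[X], a ≠ 0 → a' ≠ 0 → Squarefree b →
          a ^ 2 * b ^ 3 = a' ^ 2 * b' ^ 3 → P ∣ b → ¬P ∣ b' → False := by
        intro a b a' b' ha0 ha'0 hsb heq hPb hPb'
        obtain ⟨α, u, hu, hau⟩ := WfDvdMonoid.max_power_factor ha0 hPi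
        obtain ⟨β, v, hv, ha'v⟩ := WfDvdMonoid.max_power_factor ha'0 hPi
        obtain ⟨b'', hb''⟩ := hPb
        have hPb'' : ¬P ∣ b'' := by
          intro hd
          exact hPi.not_isUnit (hsb P (by rw [hb'']; exact mul_dvd_mul_left P hd))
        have e1 : a ^ 2 * b ^ 3 = P ^ (2 * α + 3) * (u ^ 2 * b'' ^ 3) := by
          rw [hau, hb'']; ring
        have e2 : a' ^ 2 * b' ^ 3 = P ^ (2 * β) * (v ^ 2 * b' ^ 3) := by
          rw [ha'v]; ring
        have hnd1 : ¬P ∣ u ^ 2 * b'' ^ 3 := by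
          intro hd
          rcases hPp.dvd_mul.mp hd with hd' | hd'
          · exact hu (hPp.dvd_of_dvd_pow hd')
          · exact hPb'' (hPp.dvd_of_dvd_pow hd')
        have hnd2 : ¬P ∣ v ^ 2 * b' ^ 3 := by
          intro hd
          rcases hPp.dvd_mul.mp hd with hd' | hd'
          · exact hv (hPp.dvd_of_dvd_pow hd')
          · exact hPb' (hPp.dvd_of_dvd_pow hd')
        have := pow_eq_pow_aux hPp (2 * α + 3) (2 * β) _ _ hnd1 hnd2
          (by rw [← e1, heq, e2])
        omega
      by_cases h₁ : P ∣ b₁ <;> by_cases h₂ : P ∣ b₂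
      · obtain ⟨b₁', hb₁'⟩ := h₁
        obtain ⟨b₂', hb₂'⟩ := h₂
        have hb₁'m : b₁'.Monic := hPm.of_mul_monic_left (hb₁' ▸ hb₁)
        have hb₂'m : b₂'.Monic := hPm.of_mul_monic_left (hb₂' ▸ hb₂)
        have hcan : a₁ ^ 2 * b₁' ^ 3 = a₂ ^ 2 * b₂' ^ 3 := by
          apply mul_left_cancel₀ (pow_ne_zero 3 hPm.ne_zero)
          have := h
          rw [hb₁', hb₂'] at this
          calc P ^ 3 * (a₁ ^ 2 * b₁' ^ 3) = a₁ ^ 2 * (P * b₁') ^ 3 := by ring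
            _ = a₂ ^ 2 * (P * b₂') ^ 3 := this
            _ = P ^ 3 * (a₂ ^ 2 * b₂' ^ 3) := by ring
        have hs₁' : Squarefree b₁' := hs₁.squarefree_of_dvd ⟨P, by rw [hb₁']; ring⟩
        have hs₂' : Squarefree b₂' := hs₂.squarefree_of_dvd ⟨P, by rw [hb₂']; ring⟩
        have hdlt : (a₁ ^ 2 * b₁' ^ 3).natDegree < n := by
          have : (a₁ ^ 2 * b₁' ^ 3).natDegree = 2 * a₁.natDegree + 3 * b₁'.natDegree := by
            rw [(ha₁.pow 2).natDegree_mul (hb₁'m.pow 3), ha₁.natDegree_pow,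
              hb₁'m.natDegree_pow]
          have hdb : b₁.natDegree = P.natDegree + b₁'.natDegree := by
            rw [hb₁', hPm.natDegree_mul hb₁'m]
          omega
        obtain ⟨e1, e2⟩ := ih _ hdlt a₁ b₁' a₂ b₂' ha₁ hb₁'m ha₂ hb₂'m hs₁' hs₂' hcan le_rfl
        exact ⟨e1, by rw [hb₁', hb₂', e2]⟩
      · exact absurd (key a₁ b₁ a₂ b₂ ha₁.ne_zero ha₂.ne_zero hs₁ h h₁ h₂) id
      · exact absurd (key a₂ b₂ a₁ b₁ ha₂.ne_zero ha₁.ne_zero hs₂ h.symm h₂ h₁) id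
      · have hPa₁ : P ∣ a₁ := by
          rcases hPp.dvd_mul.mp hPf with hd | hd
          · exact hPp.dvd_of_dvd_pow hd
          · exact absurd (hPp.dvd_of_dvd_pow hd) h₁
        have hPa₂ : P ∣ a₂ := by
          rcases hPp.dvd_mul.mp (h ▸ hPf) with hd | hd
          · exact hPp.dvd_of_dvd_pow hd
          · exact absurd (hPp.dvd_of_dvd_pow hd) h₂
        obtain ⟨a₁', ha₁'⟩ := hPa₁
        obtain ⟨a₂', ha₂'⟩ := hPa₂
        have ha₁'m : a₁'.Monic := hPm.of_mul_monic_left (ha₁' ▸ ha₁)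
        have ha₂'m : a₂'.Monic := hPm.of_mul_monic_left (ha₂' ▸ ha₂)
        have hcan : a₁' ^ 2 * b₁ ^ 3 = a₂' ^ 2 * b₂ ^ 3 := by
          apply mul_left_cancel₀ (pow_ne_zero 2 hPm.ne_zero)
          have := h
          rw [ha₁', ha₂'] at this
          calc P ^ 2 * (a₁' ^ 2 * b₁ ^ 3) = (P * a₁') ^ 2 * b₁ ^ 3 := by ring
            _ = (P * a₂') ^ 2 * b₂ ^ 3 := this
            _ = P ^ 2 * (a₂' ^ 2 * b₂ ^ 3) := by ring
        have hdlt : (a₁' ^ 2 * b₁ ^ 3).natDegree < n := by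
          have : (a₁' ^ 2 * b₁ ^ 3).natDegree = 2 * a₁'.natDegree + 3 * b₁.natDegree := by
            rw [(ha₁'m.pow 2).natDegree_mul (hb₁.pow 3), ha₁'m.natDegree_pow,
              hb₁.natDegree_pow]
          have hda : a₁.natDegree = P.natDegree + a₁'.natDegree := by
            rw [ha₁', hPm.natDegree_mul ha₁'m]
          omega
        obtain ⟨e1, e2⟩ := ih _ hdlt a₁' b₁ a₂' b₂ ha₁'m hb₁ ha₂'m hb₂ hs₁ hs₂ hcan le_rfl
        exact ⟨by rw [ha₁', ha₂', e1], e2⟩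


/-! ### Convolution -/

lemma conv_coeff (φ ψ : PowerSeries ℂ) (S T U : ℕ → Finset F[X])
    (vS vT vU : F[X] → ℂ)
    (pS pT pU : F[X] → Prop) (wS wT wU : F[X] → ℕ)
    (hS : ∀ i (f : F[X]), f ∈ S i ↔ pS f ∧ wS f = i)
    (hT : ∀ j (f : F[X]), f ∈ T j ↔ pT f ∧ wT f = j)
    (hU : ∀ n (f : F[X]), f ∈ U n ↔ pU f ∧ wU f = n)
    (hφ : ∀ i, PowerSeries.coeff i φ = ∑ f ∈ S i, vS f)
    (hψ : ∀ j, PowerSeries.coeff j ψ = ∑ f ∈ T j, vT f)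
    (μ : F[X] → F[X] → F[X])
    (hmap : ∀ a b, pS a → pT b →
      pU (μ a b) ∧ wU (μ a b) = wS a + wT b ∧ vU (μ a b) = vS a * vT b)
    (hinj : ∀ a b a' b', pS a → pT b → pS a' → pT b' → μ a b = μ a' b' → a = a' ∧ b = b')
    (hsurj : ∀ f, pU f → ∃ a b, pS a ∧ pT b ∧ μ a b = f)
    (n : ℕ) :
    PowerSeries.coeff n (φ * ψ) = ∑ f ∈ U n, vU f := by
  rw [PowerSeries.coeff_mul]
  rw [Finset.sum_congr rfl (fun p _ => by
    rw [hφ p.1, hψ p.2, Finset.sum_mul_sum,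
      ← Finset.sum_product' (S p.1) (T p.2) (fun a b => vS a * vT b)])]
  rw [Finset.sum_sigma']
  apply Finset.sum_bij (fun x _ => μ x.2.1 x.2.2)
  · rintro ⟨⟨i, j⟩, a, b⟩ hx
    rw [Finset.mem_sigma, Finset.HasAntidiagonal.mem_antidiagonal, Finset.mem_product] at hx
    obtain ⟨hij, ha, hb⟩ := hx
    obtain ⟨hpa, hwa⟩ := (hS _ _).mp ha
    obtain ⟨hpb, hwb⟩ := (hT _ _).mp hb
    obtain ⟨hp, hw, _⟩ := hmap a b hpa hpb
    exact (hU _ _).mpr ⟨hp, by simp only at hwa hwb ⊢; rw [hw, hwa, hwb]; exact hij⟩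
  · rintro ⟨⟨i, j⟩, a, b⟩ hx ⟨⟨i', j'⟩, a', b'⟩ hx' heq
    rw [Finset.mem_sigma, Finset.HasAntidiagonal.mem_antidiagonal, Finset.mem_product] at hx hx'
    obtain ⟨hij, ha, hb⟩ := hx
    obtain ⟨hij', ha', hb'⟩ := hx'
    obtain ⟨hpa, hwa⟩ := (hS _ _).mp ha
    obtain ⟨hpb, hwb⟩ := (hT _ _).mp hb
    obtain ⟨hpa', hwa'⟩ := (hS _ _).mp ha'
    obtain ⟨hpb', hwb'⟩ := (hT _ _).mp hb'
    obtain ⟨rfl, rfl⟩ := hinj a b a' b' hpa hpb hpa' hpb' heq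
    simp only at hwa hwb hwa' hwb'
    have h1 : i = i' := by rw [← hwa, ← hwa']
    have h2 : j = j' := by rw [← hwb, ← hwb']
    subst h1; subst h2; rfl
  · intro f hf
    obtain ⟨hpf, hwf⟩ := (hU _ _).mp hf
    obtain ⟨a, b, hpa, hpb, hab⟩ := hsurj f hpf
    refine ⟨⟨(wS a, wT b), (a, b)⟩, ?_, hab⟩
    rw [Finset.mem_sigma, Finset.HasAntidiagonal.mem_antidiagonal, Finset.mem_product]
    refine ⟨?_, (hS _ _).mpr ⟨hpa, rfl⟩, (hT _ _).mpr ⟨hpb, rfl⟩⟩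
    simp only
    rw [← hwf, ← hab, (hmap a b hpa hpb).2.1]
  · rintro ⟨⟨i, j⟩, a, b⟩ hx
    rw [Finset.mem_sigma, Finset.HasAntidiagonal.mem_antidiagonal, Finset.mem_product] at hx
    obtain ⟨hij, ha, hb⟩ := hx
    exact ((hmap a b ((hS _ _).mp ha).1 ((hT _ _).mp hb).1).2.2).symm

variable {Q}

section Char

variable (χ₂ : MulChar (F[X] ⧸ Ideal.span {Q}) ℂ) (hχ : χ₂ ^ 2 = 1)
include hχ

lemma val_sq (x : F[X] ⧸ Ideal.span {Q}) :
    χ₂ x ^ 2 = (1 : MulChar (F[X] ⧸ Ideal.span {Q}) ℂ) x := by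
  rw [← MulChar.pow_apply' χ₂ two_ne_zero, hχ]

lemma val1 (b c : F[X]) :
    χ₂ (Ideal.Quotient.mk (Ideal.span {Q}) (b * c ^ 2))
      = χ₂ (Ideal.Quotient.mk (Ideal.span {Q}) b)
        * (1 : MulChar (F[X] ⧸ Ideal.span {Q}) ℂ) (Ideal.Quotient.mk (Ideal.span {Q}) c) := by
  rw [map_mul, map_mul, map_pow, map_pow, val_sq χ₂ hχ]

lemma val2 (a b : F[X]) :
    χ₂ (Ideal.Quotient.mk (Ideal.span {Q}) (a ^ 2 * b ^ 3))
      = (1 : MulChar (F[X] ⧸ Ideal.span {Q}) ℂ) (Ideal.Quotient.mk (Ideal.span {Q}) a)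
        * χ₂ (Ideal.Quotient.mk (Ideal.span {Q}) b) := by
  rw [map_mul, map_mul, map_pow, map_pow, map_pow, map_pow, val_sq χ₂ hχ]
  congr 1
  set y := Ideal.Quotient.mk (Ideal.span {Q}) b
  have : χ₂ y ^ 3 = χ₂ y * χ₂ y ^ 2 := by ring
  rw [this, val_sq χ₂ hχ]
  by_cases hy : IsUnit y
  · rw [MulChar.one_apply hy, mul_one]
  · rw [MulChar.map_nonunit _ hy, MulChar.map_nonunit _ hy, zero_mul]

omit hχ in
/-- The squarefree-part generating series `B(u) = Σ_b squarefree χ₂(b) u^{3 deg b}`. -/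
noncomputable def Bser : PowerSeries ℂ :=
  PowerSeries.mk fun n => ∑ b ∈ (SFS 3 n : Finset F[X]), χ₂ (Ideal.Quotient.mk (Ideal.span {Q}) b)

lemma L3_eq : Lpow Q χ₂ 3 = Bser χ₂ * Lpow Q 1 6 := by
  ext n
  rw [coeff_Lpow Q χ₂ (by norm_num) n]
  exact (conv_coeff (Bser χ₂) (Lpow Q 1 6) (SFS 3) (MS 6) (MS 3)
    (fun b => χ₂ (Ideal.Quotient.mk (Ideal.span {Q}) b))
    (fun c => (1 : MulChar (F[X] ⧸ Ideal.span {Q}) ℂ) (Ideal.Quotient.mk (Ideal.span {Q}) c))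
    (fun f => χ₂ (Ideal.Quotient.mk (Ideal.span {Q}) f))
    (fun b => b.Monic ∧ Squarefree b) (fun c => c.Monic) (fun f => f.Monic)
    (fun b => 3 * b.natDegree) (fun c => 6 * c.natDegree) (fun f => 3 * f.natDegree)
    (fun i f => mem_SFS (by norm_num))
    (fun j f => mem_MS (by norm_num))
    (fun m f => mem_MS (by norm_num))
    (fun i => by rw [Bser, coeff_mk])
    (fun j => coeff_Lpow Q 1 (by norm_num) j)
    (fun b c => b * c ^ 2)
    (fun b c hb hc => by
      obtain ⟨hbm, hbs⟩ := hb
      have hcm : c.Monic := hc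
      refine ⟨hbm.mul (hcm.pow 2), ?_, val1 χ₂ hχ b c⟩
      show 3 * (b * c ^ 2).natDegree = 3 * b.natDegree + 6 * c.natDegree
      rw [hbm.natDegree_mul (hcm.pow 2), hcm.natDegree_pow]; ring)
    (fun b c b' c' hb hc hb' hc' heq =>
      uniq_sf_sq (b * c ^ 2).natDegree b c b' c' hb.1 hc hb'.1 hc' hb.2 hb'.2 heq le_rfl)
    (fun f hf => by
      obtain ⟨b, c, hbm, hcm, hsf, hfeq⟩ := exists_sf_sq f.natDegree f hf le_rfl
      exact ⟨b, c, ⟨hbm, hsf⟩, hcm, hfeq.symm⟩)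
    n).symm

lemma RHS_eq :
    (PowerSeries.mk fun n =>
        ∑ᶠ f : {f : Polynomial F // f.Monic ∧ f.natDegree = n ∧ IsSquareFullPoly f},
          χ₂ (Ideal.Quotient.mk (Ideal.span {Q}) f.1))
      = Lpow Q 1 2 * Bser χ₂ := by
  ext n
  rw [coeff_mk]
  rw [finsum_subtype_eq_finsum_cond
    (f := fun f => χ₂ (Ideal.Quotient.mk (Ideal.span {Q}) f))
    (fun f : F[X] => f.Monic ∧ f.natDegree = n ∧ IsSquareFullPoly f)]
  rw [show (∑ᶠ (f : F[X]) (_ : f.Monic ∧ f.natDegree = n ∧ IsSquareFullPoly f),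
        χ₂ (Ideal.Quotient.mk (Ideal.span {Q}) f))
      = ∑ f ∈ ((monic_set_finite (F := F) n).subset (by
          rintro f ⟨h1, h2, _⟩; exact ⟨h1, h2⟩) :
         {f : F[X] | f.Monic ∧ f.natDegree = n ∧ IsSquareFullPoly f}.Finite).toFinset,
        χ₂ (Ideal.Quotient.mk (Ideal.span {Q}) f) from
    finsum_mem_eq_finite_toFinset_sum _ _]
  rw [show (((monic_set_finite (F := F) n).subset (by
          rintro f ⟨h1, h2, _⟩; exact ⟨h1, h2⟩) :
         {f : F[X] | f.Monic ∧ f.natDegree = n ∧ IsSquareFullPoly f}.Finite).toFinset)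
      = (SQS n : Finset F[X]) from by
    ext f
    rw [Set.Finite.mem_toFinset, mem_SQS]
    constructor
    · rintro ⟨h1, h2, h3⟩; exact ⟨⟨h1, h3⟩, h2⟩
    · rintro ⟨⟨h1, h3⟩, h2⟩; exact ⟨h1, h2, h3⟩]
  exact (conv_coeff (Lpow Q 1 2) (Bser χ₂) (MS 2) (SFS 3) SQS
    (fun a => (1 : MulChar (F[X] ⧸ Ideal.span {Q}) ℂ) (Ideal.Quotient.mk (Ideal.span {Q}) a))
    (fun b => χ₂ (Ideal.Quotient.mk (Ideal.span {Q}) b))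
    (fun f => χ₂ (Ideal.Quotient.mk (Ideal.span {Q}) f))
    (fun a => a.Monic) (fun b => b.Monic ∧ Squarefree b)
    (fun f => f.Monic ∧ IsSquareFullPoly f)
    (fun a => 2 * a.natDegree) (fun b => 3 * b.natDegree) (fun f => f.natDegree)
    (fun i f => mem_MS (by norm_num))
    (fun j f => mem_SFS (by norm_num))
    (fun m f => mem_SQS)
    (fun i => coeff_Lpow Q 1 (by norm_num) i)
    (fun j => by rw [Bser, coeff_mk])
    (fun a b => a ^ 2 * b ^ 3)
    (fun a b ha hb => by
      obtain ⟨hbm, hbs⟩ := hb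
      have ham : a.Monic := ha
      refine ⟨⟨(ham.pow 2).mul (hbm.pow 3), sqfull_pow_mul a b⟩, ?_, val2 χ₂ hχ a b⟩
      show (a ^ 2 * b ^ 3).natDegree = 2 * a.natDegree + 3 * b.natDegree
      rw [(ham.pow 2).natDegree_mul (hbm.pow 3), ham.natDegree_pow, hbm.natDegree_pow])
    (fun a b a' b' ha hb ha' hb' heq =>
      uniq_sqfull (a ^ 2 * b ^ 3).natDegree a b a' b' ha hb.1 ha' hb'.1 hb.2 hb'.2 heq le_rfl)
    (fun f hf => by
      obtain ⟨a, b, ham, hbm, hsf, hfeq⟩ := exists_sqfull f.natDegree f hf.1 hf.2 le_rfl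
      exact ⟨a, b, ham, ⟨hbm, hsf⟩, hfeq.symm⟩)
    n).symm

end Char

end QCGF

/-- For `Q` a prime polynomial over `F_q` (`q` odd) and `χ₂` the quadratic character
mod `Q`, the generating function `L(u³,χ₂) · Z(u²)(1-u^{2 deg Q}) / (Z(u⁶)(1-u^{6 deg Q}))`
has `n`-th coefficient `Σ_{f ∈ M_n} α₂(f) χ₂(f)`, where `α₂` is the indicator of
square-full polynomials and `Z(u) = (1-qu)⁻¹`. -/
theorem quadratic_char_generating_function (F : Type) [Field F] [Fintype F]
    (hq : Odd (Fintype.card F)) (Q : Polynomial F) (hQ : Irreducible Q)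
    (χ₂ : MulChar (Polynomial F ⧸ Ideal.span {Q}) ℂ)
    (hχ : χ₂ ^ 2 = 1) (hχ1 : χ₂ ≠ 1) :
    Lpow Q χ₂ 3 *
        (1 - PowerSeries.C (Fintype.card F : ℂ) * PowerSeries.X ^ 2)⁻¹ *
        (1 - (PowerSeries.X : PowerSeries ℂ) ^ (2 * Q.natDegree)) *
        (1 - PowerSeries.C (Fintype.card F : ℂ) * PowerSeries.X ^ 6) *
        (1 - (PowerSeries.X : PowerSeries ℂ) ^ (6 * Q.natDegree))⁻¹ =
      PowerSeries.mk fun n =>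
        ∑ᶠ f : {f : Polynomial F // f.Monic ∧ f.natDegree = n ∧ IsSquareFullPoly f},
          χ₂ (Ideal.Quotient.mk (Ideal.span {Q}) f.1) := by
  have hd : 1 ≤ Q.natDegree := hQ.natDegree_pos
  have hL3 := QCGF.L3_eq (Q := Q) χ₂ hχ
  have hA := QCGF.G1 Q hQ (k := 2) two_ne_zero
  have hW := QCGF.G1 Q hQ (k := 6) (by norm_num)
  rw [QCGF.RHS_eq χ₂ hχ, hL3]
  set u₁ : PowerSeries ℂ := 1 - PowerSeries.C (Fintype.card F : ℂ) * PowerSeries.X ^ 2 with hu₁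
  set u₂ : PowerSeries ℂ := 1 - (PowerSeries.X : PowerSeries ℂ) ^ (6 * Q.natDegree) with hu₂
  have hc₁ : PowerSeries.constantCoeff u₁ = 1 := by
    simp [hu₁]
  have hc₂ : PowerSeries.constantCoeff u₂ = 1 := by
    simp [hu₂]
    omega
  have h₁ne : u₁ ≠ 0 := fun h => one_ne_zero (α := ℂ) (by rw [← hc₁, h, map_zero])
  have h₂ne : u₂ ≠ 0 := fun h => one_ne_zero (α := ℂ) (by rw [← hc₂, h, map_zero])
  have hi₁ : u₁ * u₁⁻¹ = 1 := PowerSeries.mul_inv_cancel _ (by rw [hc₁]; exact one_ne_zero)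
  have hi₂ : u₂ * u₂⁻¹ = 1 := PowerSeries.mul_inv_cancel _ (by rw [hc₂]; exact one_ne_zero)
  apply mul_right_cancel₀ h₁ne
  apply mul_right_cancel₀ h₂ne
  have expand : QCGF.Bser χ₂ * Lpow Q 1 6 * u₁⁻¹ *
        (1 - (PowerSeries.X : PowerSeries ℂ) ^ (2 * Q.natDegree)) *
        (1 - PowerSeries.C (Fintype.card F : ℂ) * PowerSeries.X ^ 6) * u₂⁻¹ * u₁ * u₂
      = QCGF.Bser χ₂ * Lpow Q 1 6 *
        (1 - (PowerSeries.X : PowerSeries ℂ) ^ (2 * Q.natDegree)) *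
        (1 - PowerSeries.C (Fintype.card F : ℂ) * PowerSeries.X ^ 6) *
        (u₁ * u₁⁻¹) * (u₂ * u₂⁻¹) := by ring
  rw [expand, hi₁, hi₂, mul_one, mul_one, ← hA, ← hW]
  ring
end
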